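/- Let Γ be a diagram of finite type on vertices 1,…,n containing a chordless cycle 0→1→⋯→(d−1)→0 with all edge weights equal to 1, and let W be any group with elements s_1,…,s_n satisfying relations (R1) and (R2) for Γ. Then, with r(a,a+1) := s_a s_{a+1} ⋯ s_{a+d−1} s_{a+d−2} ⋯ s_{a+1} (indices mod d), the identity r(d−1,0) = s_0 s_{d−1} r(0,1) s_{d−1} s_0 holds in W. -/

import Mathlib

namespace ClusterReflection

variable {n : ℕ}

def IsSkewSymmetrizable (B : Matrix (Fin n) (Fin n) ℤ) : Prop :=
  ∃ d : Fin n → ℤ, (∀ i, 0 < d i) ∧ ∀ i j, d i * B i j = -(d j * B j i)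

def mutate (k : Fin n) (B : Matrix (Fin n) (Fin n) ℤ) : Matrix (Fin n) (Fin n) ℤ :=
  Matrix.of fun i j =>
    if i = k ∨ j = k then -B i j
    else B i j + (|B i k| * B k j + B i k * |B k j|) / 2

def Mutation (X Y : Matrix (Fin n) (Fin n) ℤ) : Prop := ∃ k, Y = mutate k X

def IsFiniteType (B : Matrix (Fin n) (Fin n) ℤ) : Prop :=
  ∀ B', Relation.ReflTransGen Mutation B B' → ∀ i j, |B' i j * B' j i| ≤ 3

/-- The Coxeter exponent `m i j` attached to a pair of vertices of the diagram of `B`: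
`2` if there is no edge, and `3`, `4`, `6` for an edge of weight `1`, `2`, `3`. -/
def coxm (B : Matrix (Fin n) (Fin n) ℤ) (i j : Fin n) : ℕ :=
  if B i j * B j i = 0 then 2
  else if |B i j * B j i| = 1 then 3
  else if |B i j * B j i| = 2 then 4
  else 6

/-- Relations (R1). -/
def R1 {W : Type*} [Group W] (s : Fin n → W) : Prop := ∀ i, s i ^ 2 = 1

/-- Relations (R2). -/
def R2 {W : Type*} [Group W] (B : Matrix (Fin n) (Fin n) ℤ) (s : Fin n → W) : Prop :=
  ∀ i j, i ≠ j → (s i * s j) ^ coxm B i j = 1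

/-- `v : ZMod d → Fin n` lists the vertices of an (oriented) chordless cycle
`v 0 → v 1 → ⋯ → v (d-1) → v 0` of the diagram of `B`. -/
def IsChordlessCycle (B : Matrix (Fin n) (Fin n) ℤ) {d : ℕ} (v : ZMod d → Fin n) : Prop :=
  Function.Injective v ∧ (∀ a : ZMod d, 0 < B (v a) (v (a + 1))) ∧
    ∀ a b : ZMod d, a ≠ b → b ≠ a + 1 → a ≠ b + 1 → B (v a) (v b) = 0

/-- The element `r(i_a, i_{a+1}) = s_{i_a} s_{i_{a+1}} ⋯ s_{i_{a+d-1}} s_{i_{a+d-2}} ⋯ s_{i_{a+1}}`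
attached to a chordless cycle `v` and a starting vertex `a`. -/
def cycleWord {W : Type*} [Group W] (s : Fin n → W) {d : ℕ} (v : ZMod d → Fin n)
    (a : ZMod d) : W :=
  (((List.range d).map fun t => s (v (a + (t : ZMod d)))).prod) *
    (((List.range (d - 2)).map fun t => s (v (a + ((d - 2 - t : ℕ) : ZMod d)))).prod)

open scoped Classical in
/-- The exponent in relation (R3): `2` if all the weights of the cycle are `1`, and otherwise
`4 - w_a`, where `w_a` is the weight of the edge of the cycle between `v (a-1)` and `v a`. -/
noncomputable def cycleExp (B : Matrix (Fin n) (Fin n) ℤ) {d : ℕ} (v : ZMod d → Fin n)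
    (a : ZMod d) : ℕ :=
  if ∀ b : ZMod d, |B (v b) (v (b + 1)) * B (v (b + 1)) (v b)| = 1 then 2
  else 4 - (|B (v (a - 1)) (v a) * B (v a) (v (a - 1))|).toNat

/-- Relations (R3). -/
def R3 {W : Type*} [Group W] (B : Matrix (Fin n) (Fin n) ℤ) (s : Fin n → W) : Prop :=
  ∀ d : ℕ, 3 ≤ d → ∀ v : ZMod d → Fin n, IsChordlessCycle B v →
    ∀ a : ZMod d, cycleWord s v a ^ cycleExp B v a = 1

/-- The set of relators (R1), (R2), (R3) in the free group on the vertices. -/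
def diagramRels (B : Matrix (Fin n) (Fin n) ℤ) : Set (FreeGroup (Fin n)) :=
  {w | (∃ i, w = FreeGroup.of i ^ 2) ∨
       (∃ i j, i ≠ j ∧ w = (FreeGroup.of i * FreeGroup.of j) ^ coxm B i j) ∨
       (∃ d : ℕ, 3 ≤ d ∧ ∃ v : ZMod d → Fin n, IsChordlessCycle B v ∧
          ∃ a : ZMod d, w = cycleWord FreeGroup.of v a ^ cycleExp B v a)}

/-- The group `W_Γ` associated to the diagram of `B`. -/
abbrev DiagramGroup (B : Matrix (Fin n) (Fin n) ℤ) : Type := PresentedGroup (diagramRels B)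

/-- identity from the proof of Lemma 4.1: for a chordless cycle
`v 0 → v 1 → ⋯ → v (d-1) → v 0` (vertices labelled by `ZMod d`, so that `v (-1) = v (d-1)`)
with all edge weights `1` in a diagram of finite type, and any group elements `s i` satisfying
(R1) and (R2), one has `r(d-1, 0) = s_0 s_{d-1} r(0,1) s_{d-1} s_0`. -/
private lemma braid_of_rels {W : Type*} [Group W] {x y : W}
    (hx : x ^ 2 = 1) (hy : y ^ 2 = 1) (h : (x * y) ^ 3 = 1) :
    x * y * x = y * x * y := by
  have hx' : x * x = 1 := by rw [← sq]; exact hx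
  have hy' : y * y = 1 := by rw [← sq]; exact hy
  have key : (x * y * x) * (y * x * y) = 1 := by
    have h' : (x * y * x) * (y * x * y) = (x * y) ^ 3 := by
      simp [pow_succ, mul_assoc]
    rw [h', h]
  have hxi : x⁻¹ = x := inv_eq_of_mul_eq_one_right hx'
  have hyi : y⁻¹ = y := inv_eq_of_mul_eq_one_right hy'
  calc x * y * x = (y * x * y)⁻¹ := eq_inv_of_mul_eq_one_left key
    _ = y⁻¹ * x⁻¹ * y⁻¹ := by simp [mul_inv_rev, mul_assoc]
    _ = y * x * y := by rw [hxi, hyi]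

private lemma commute_of_rels {W : Type*} [Group W] {x y : W}
    (hx : x ^ 2 = 1) (hy : y ^ 2 = 1) (h : (x * y) ^ 2 = 1) :
    x * y = y * x := by
  have hx' : x * x = 1 := by rw [← sq]; exact hx
  have hy' : y * y = 1 := by rw [← sq]; exact hy
  have key : (x * y) * (x * y) = 1 := by rw [← sq]; exact h
  have hxi : x⁻¹ = x := inv_eq_of_mul_eq_one_right hx'
  have hyi : y⁻¹ = y := inv_eq_of_mul_eq_one_right hy'
  calc x * y = (x * y)⁻¹ := eq_inv_of_mul_eq_one_left key
    _ = y * x := by rw [mul_inv_rev, hxi, hyi]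

private lemma key_calc {W : Type*} [Group W] (A B c q S : W)
    (hA2 : A * A = 1)
    (hb1 : A * B * A = B * A * B)
    (hb2 : c * A * c = A * c * A)
    (hq : q * A = A * q) (hS : S * A = A * S) :
    A * B * q * c * (S * B) = B * A * (B * q * c * A * (c * S)) * A * B := by
  have e1 : ∀ x : W, A * (A * x) = x := fun x => by rw [← mul_assoc, hA2, one_mul]
  have e2 : ∀ x : W, B * (A * (B * x)) = A * (B * (A * x)) := fun x => by
    rw [← mul_assoc, ← mul_assoc, ← hb1, mul_assoc, mul_assoc]
  have e3 : ∀ x : W, c * (A * (c * x)) = A * (c * (A * x)) := fun x => by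
    rw [← mul_assoc, ← mul_assoc, hb2, mul_assoc, mul_assoc]
  have e4 : ∀ x : W, q * (A * x) = A * (q * x) := fun x => by rw [← mul_assoc, hq, mul_assoc]
  have e5 : ∀ x : W, S * (A * x) = A * (S * x) := fun x => by rw [← mul_assoc, hS, mul_assoc]
  simp only [mul_assoc]
  rw [e5, e3, e1, e4, e2, e1]

private lemma prod_range_hh3 {M : Type*} [Monoid M] (g : ℕ → M) (e : ℕ) :
    ((List.range (e+3)).map g).prod
      = g 0 * g 1 * ((List.range e).map fun t => g (t+2)).prod * g (e+2) := by
  rw [show List.range (e+3) = List.range (e+2) ++ [e+2] from List.range_succ,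
      show List.range (e+2) = 0 :: (List.range (e+1)).map Nat.succ from List.range_succ_eq_map,
      show List.range (e+1) = 0 :: (List.range e).map Nat.succ from List.range_succ_eq_map]
  simp [mul_assoc, Function.comp_def, Nat.succ_eq_add_one, List.map_map]

private lemma prod_range_hht3 {M : Type*} [Monoid M] (g : ℕ → M) (e : ℕ) :
    ((List.range (e+3)).map g).prod
      = g 0 * ((List.range e).map fun t => g (t+1)).prod * g (e+1) * g (e+2) := by
  rw [show List.range (e+3) = List.range (e+2) ++ [e+2] from List.range_succ,
      show List.range (e+2) = List.range (e+1) ++ [e+1] from List.range_succ,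
      show List.range (e+1) = 0 :: (List.range e).map Nat.succ from List.range_succ_eq_map]
  simp [mul_assoc, Function.comp_def, Nat.succ_eq_add_one, List.map_map]

private lemma prod_range_head {M : Type*} [Monoid M] (g : ℕ → M) (e : ℕ) :
    ((List.range (e+1)).map g).prod
      = g 0 * ((List.range e).map fun t => g (t+1)).prod := by
  rw [List.range_succ_eq_map]
  simp [Function.comp_def, Nat.succ_eq_add_one, List.map_map]

private lemma prod_range_last {M : Type*} [Monoid M] (g : ℕ → M) (e : ℕ) :
    ((List.range (e+1)).map g).prod
      = ((List.range e).map g).prod * g e := by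
  rw [List.range_succ]; simp

theorem cycle_word_conjugation_identity
    (B : Matrix (Fin n) (Fin n) ℤ)
    (hskew : IsSkewSymmetrizable B) (hft : IsFiniteType B)
    {d : ℕ} (hd : 3 ≤ d) (v : ZMod d → Fin n) (hcyc : IsChordlessCycle B v)
    (hw : ∀ b : ZMod d, |B (v b) (v (b + 1)) * B (v (b + 1)) (v b)| = 1)
    {W : Type*} [Group W] (s : Fin n → W) (h1 : R1 s) (h2 : R2 B s) :
    cycleWord s v (-1) =
      s (v 0) * s (v (-1)) * cycleWord s v 0 * s (v (-1)) * s (v 0) := by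
  obtain ⟨e, rfl⟩ : ∃ e, d = e + 3 := ⟨d - 3, by omega⟩
  haveI : Fact (1 < e + 3) := ⟨by omega⟩
  obtain ⟨hinj, hpos, hchord⟩ := hcyc
  have hz : ((e : ZMod (e + 3)) + 3) = 0 := by
    have hz0 : ((e + 3 : ℕ) : ZMod (e + 3)) = 0 := ZMod.natCast_self _
    push_cast at hz0
    linear_combination hz0
  have c1 : ((e + 2 : ℕ) : ZMod (e + 3)) = -1 := by push_cast; linear_combination hz
  have c2 : ((e + 1 : ℕ) : ZMod (e + 3)) + 1 = -1 := by push_cast; linear_combination hz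
  have hne : ∀ i j : ℕ, i < e + 3 → j < e + 3 → i ≠ j →
      ((i : ZMod (e + 3)) ≠ (j : ZMod (e + 3))) := by
    intro i j hi hj hij h
    apply hij
    have hval := congrArg ZMod.val h
    rwa [ZMod.val_cast_of_lt hi, ZMod.val_cast_of_lt hj] at hval
  have braid : ∀ a : ZMod (e + 3),
      s (v a) * s (v (a + 1)) * s (v a) = s (v (a + 1)) * s (v a) * s (v (a + 1)) := by
    intro a
    have hane : a ≠ a + 1 := by
      intro h
      nth_rewrite 1 [show a = a + 0 from (add_zero a).symm] at h
      exact one_ne_zero (add_left_cancel h).symm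
    have hva : v a ≠ v (a + 1) := fun h => hane (hinj h)
    have hm : coxm B (v a) (v (a + 1)) = 3 := by
      have hw' := hw a
      unfold coxm
      rw [if_neg, if_pos hw']
      intro h0
      rw [h0] at hw'
      simp at hw'
    have hr := h2 (v a) (v (a + 1)) hva
    rw [hm] at hr
    exact braid_of_rels (h1 _) (h1 _) hr
  have comm : ∀ a b : ZMod (e + 3), a ≠ b → b ≠ a + 1 → a ≠ b + 1 →
      s (v a) * s (v b) = s (v b) * s (v a) := by
    intro a b hab hba1 hab1
    have hB : B (v a) (v b) = 0 := hchord a b hab hba1 hab1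
    have hm : coxm B (v a) (v b) = 2 := by
      unfold coxm
      rw [if_pos (by rw [hB]; ring)]
    have hva : v a ≠ v b := fun h => hab (hinj h)
    have hr := h2 (v a) (v b) hva
    rw [hm] at hr
    exact commute_of_rels (h1 _) (h1 _) hr
  have hAf : ∀ i : ℕ, 1 ≤ i → i ≤ e →
      s (v (-1)) * s (v (i : ZMod (e + 3))) = s (v (i : ZMod (e + 3))) * s (v (-1)) := by
    intro i h1i hie
    have ha : (-1 : ZMod (e + 3)) = ((e + 2 : ℕ) : ZMod (e + 3)) := c1.symm
    apply comm
    · rw [ha]; exact hne (e + 2) i (by omega) (by omega) (by omega)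
    · rw [neg_add_cancel,
        show (0 : ZMod (e + 3)) = ((0 : ℕ) : ZMod (e + 3)) from (Nat.cast_zero).symm]
      exact hne i 0 (by omega) (by omega) (by omega)
    · rw [ha, show ((i : ZMod (e + 3)) + 1) = ((i + 1 : ℕ) : ZMod (e + 3)) from by push_cast; ring]
      exact hne (e + 2) (i + 1) (by omega) (by omega) (by omega)
  -- relation instances
  have hA2 : s (v (-1 : ZMod (e + 3))) * s (v (-1 : ZMod (e + 3))) = 1 := by
    have := h1 (v (-1 : ZMod (e + 3))); rwa [pow_two] at this
  have hb1 : s (v (-1 : ZMod (e + 3))) * s (v (0 : ZMod (e + 3))) * s (v (-1 : ZMod (e + 3)))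
      = s (v (0 : ZMod (e + 3))) * s (v (-1 : ZMod (e + 3))) * s (v (0 : ZMod (e + 3))) := by
    have := braid (-1)
    rwa [neg_add_cancel] at this
  have hb2 : s (v ((e + 1 : ℕ) : ZMod (e + 3))) * s (v (-1 : ZMod (e + 3)))
        * s (v ((e + 1 : ℕ) : ZMod (e + 3)))
      = s (v (-1 : ZMod (e + 3))) * s (v ((e + 1 : ℕ) : ZMod (e + 3)))
        * s (v (-1 : ZMod (e + 3))) := by
    have := braid ((e + 1 : ℕ) : ZMod (e + 3))
    rwa [c2] at this
  have hQA : (((List.range e).map fun t => s (v ((t + 1 : ℕ) : ZMod (e + 3)))).prod)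
        * s (v (-1 : ZMod (e + 3)))
      = s (v (-1 : ZMod (e + 3)))
        * (((List.range e).map fun t => s (v ((t + 1 : ℕ) : ZMod (e + 3)))).prod) := by
    have hcom : Commute (s (v (-1 : ZMod (e + 3))))
        (((List.range e).map fun t => s (v ((t + 1 : ℕ) : ZMod (e + 3)))).prod) := by
      apply Commute.list_prod_right
      intro x hx
      simp only [List.mem_map, List.mem_range] at hx
      obtain ⟨t, ht, rfl⟩ := hx
      exact hAf (t + 1) (by omega) (by omega)
    exact hcom.symm.eq
  have hSA : (((List.range e).map fun t => s (v ((e - t : ℕ) : ZMod (e + 3)))).prod)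
        * s (v (-1 : ZMod (e + 3)))
      = s (v (-1 : ZMod (e + 3)))
        * (((List.range e).map fun t => s (v ((e - t : ℕ) : ZMod (e + 3)))).prod) := by
    have hcom : Commute (s (v (-1 : ZMod (e + 3))))
        (((List.range e).map fun t => s (v ((e - t : ℕ) : ZMod (e + 3)))).prod) := by
      apply Commute.list_prod_right
      intro x hx
      simp only [List.mem_map, List.mem_range] at hx
      obtain ⟨t, ht, rfl⟩ := hx
      exact hAf (e - t) (by omega) (by omega)
    exact hcom.symm.eq
  have h2' : e + 3 - 2 = e + 1 := by omega
  have k1 : ∀ t : ℕ, (-1 : ZMod (e + 3)) + ((t + 2 : ℕ) : ZMod (e + 3))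
      = ((t + 1 : ℕ) : ZMod (e + 3)) := by
    intro t; push_cast; ring
  have hR0 : cycleWord s v 0
      = s (v 0) * (((List.range e).map fun t => s (v ((t + 1 : ℕ) : ZMod (e + 3)))).prod)
          * s (v ((e + 1 : ℕ) : ZMod (e + 3))) * s (v (-1 : ZMod (e + 3)))
        * (s (v ((e + 1 : ℕ) : ZMod (e + 3)))
          * (((List.range e).map fun t => s (v ((e - t : ℕ) : ZMod (e + 3)))).prod)) := by
    unfold cycleWord
    simp only [bind_pure_comp, List.map_eq_map, List.map_map, Function.comp_def]
    rw [h2']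
    simp only [zero_add]
    rw [prod_range_hht3 (fun t => s (v ((t : ℕ) : ZMod (e + 3)))) e,
        prod_range_head (fun t => s (v ((e + 1 - t : ℕ) : ZMod (e + 3)))) e]
    simp only [Nat.cast_zero, Nat.sub_zero, Nat.add_sub_add_right, c1]
  have hLHS : cycleWord s v (-1)
      = s (v (-1 : ZMod (e + 3))) * s (v 0)
          * (((List.range e).map fun t => s (v ((t + 1 : ℕ) : ZMod (e + 3)))).prod)
          * s (v ((e + 1 : ℕ) : ZMod (e + 3)))
        * ((((List.range e).map fun t => s (v ((e - t : ℕ) : ZMod (e + 3)))).prod)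
          * s (v 0)) := by
    unfold cycleWord
    simp only [bind_pure_comp, List.map_eq_map, List.map_map, Function.comp_def]
    rw [h2']
    rw [prod_range_hh3 (fun t => s (v ((-1 : ZMod (e + 3)) + (t : ZMod (e + 3))))) e,
        prod_range_last (fun t => s (v ((-1 : ZMod (e + 3)) + ((e + 1 - t : ℕ) : ZMod (e + 3))))) e]
    have hcongr : ∀ t ∈ List.range e,
        s (v ((-1 : ZMod (e + 3)) + ((e + 1 - t : ℕ) : ZMod (e + 3))))
          = s (v ((e - t : ℕ) : ZMod (e + 3))) := by
      intro t ht
      rw [List.mem_range] at ht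
      have harg : (-1 : ZMod (e + 3)) + ((e + 1 - t : ℕ) : ZMod (e + 3))
          = ((e - t : ℕ) : ZMod (e + 3)) := by
        rw [show e + 1 - t = (e - t) + 1 from by omega]
        push_cast; ring
      rw [harg]
    rw [List.map_congr_left hcongr]
    have h3' : e + 1 - e = 1 := by omega
    simp only [h3', k1, Nat.cast_zero, Nat.cast_one, add_zero, neg_add_cancel]
  rw [hLHS, hR0]
  exact key_calc _ _ _ _ _ hA2 hb1 hb2 hQA hSA



end ClusterReflection
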